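/- Let X be a compact complex manifold with b₁ = 4, h^{1,0}_{∂̄} = h^{0,1}_{∂̄} = 2 and Aeppli number h^{1,0}_A = 3. Then either H¹_{DR}(X,ℂ) or H²_{DR}(X,ℂ) fails to be pure. -/

import Mathlib

namespace Stmt7

variable {K : Type} [Field K] {V : Type} [AddCommGroup V] [Module K V]

/-- A bigraded double complex structure on `V`: grading `g p q` (the `(p,q)`-forms),
`d1 = ∂`, `d2 = ∂̄`. -/
structure IsBigradedDC (g : ℤ → ℤ → Submodule K V) (d1 d2 : V →ₗ[K] V) : Prop where
  internal : DirectSum.IsInternal (fun pq : ℤ × ℤ => g pq.1 pq.2)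
  d1_sq : ∀ v : V, d1 (d1 v) = 0
  d2_sq : ∀ v : V, d2 (d2 v) = 0
  anticomm : ∀ v : V, d1 (d2 v) + d2 (d1 v) = 0
  d1_mem : ∀ p q : ℤ, ∀ v ∈ g p q, d1 v ∈ g (p + 1) q
  d2_mem : ∀ p q : ℤ, ∀ v ∈ g p q, d2 v ∈ g p (q + 1)

def transpose (g : ℤ → ℤ → Submodule K V) : ℤ → ℤ → Submodule K V := fun p q => g q p

/-- "`d1 x` runs at least `m` times": there are `u₁, …, u_m` with
`∂x = ∂̄u₁, ∂u₁ = ∂̄u₂, …, ∂u_{m-1} = ∂̄u_m` (here `u l` is `u_{l+1}`). -/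
def RunsTimes (g : ℤ → ℤ → Submodule K V) (d1 d2 : V →ₗ[K] V) (m : ℕ) (p q : ℤ) (x : V) :
    Prop :=
  ∃ u : ℕ → V, (∀ l : ℕ, u l ∈ g (p + 1 + (l : ℤ)) (q - 1 - (l : ℤ))) ∧
    (1 ≤ m → d1 x = d2 (u 0)) ∧ ∀ l : ℕ, l + 2 ≤ m → d1 (u l) = d2 (u (l + 1))

/-- `x` (a pure `(p,q)`-form) is `E_r`-closed. -/
def ErClosed (g : ℤ → ℤ → Submodule K V) (d1 d2 : V →ₗ[K] V) (r : ℕ) (p q : ℤ) (x : V) :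
    Prop :=
  d2 x = 0 ∧ RunsTimes g d1 d2 (r - 1) p q x

/-- "`d2 z` reaches `0` in at most `m` steps":
`∂̄z = ∂v_{m-2}, ∂̄v_{m-2} = ∂v_{m-3}, …, ∂̄v₀ = 0` (here `v l` is `v_{m-2-l}`). -/
def ReachesZero (g : ℤ → ℤ → Submodule K V) (d1 d2 : V →ₗ[K] V) (m : ℕ) (p q : ℤ) (z : V) :
    Prop :=
  ∃ v : ℕ → V, (∀ l : ℕ, v l ∈ g (p - 1 - (l : ℤ)) (q + 1 + (l : ℤ))) ∧
    (m = 1 → d2 z = 0) ∧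
    (2 ≤ m → d2 z = d1 (v 0) ∧ d2 (v (m - 2)) = 0 ∧
      ∀ l : ℕ, l + 3 ≤ m → d2 (v l) = d1 (v (l + 1)))

/-- `x` (a pure `(p,q)`-form) is `E_r`-exact. -/
def ErExact (g : ℤ → ℤ → Submodule K V) (d1 d2 : V →ₗ[K] V) (r : ℕ) (p q : ℤ) (x : V) :
    Prop :=
  ∃ z ξ : V, z ∈ g (p - 1) q ∧ ξ ∈ g p (q - 1) ∧ x = d1 z + d2 ξ ∧
    (r = 1 → z = 0) ∧ (2 ≤ r → ReachesZero g d1 d2 (r - 1) (p - 1) q z)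

/-- `x` is `Ē_r`-exact (the conjugate notion: swap `∂` and `∂̄`, transpose the bigrading). -/
def ErBarExact (g : ℤ → ℤ → Submodule K V) (d1 d2 : V →ₗ[K] V) (r : ℕ) (p q : ℤ) (x : V) :
    Prop :=
  ErExact (transpose g) d2 d1 r q p x

/-- `x` is `E_rĒ_r`-closed: both `∂x` and `∂̄x` run at least `r-1` times. -/
def ErErBarClosed (g : ℤ → ℤ → Submodule K V) (d1 d2 : V →ₗ[K] V) (r : ℕ) (p q : ℤ)
    (x : V) : Prop :=
  RunsTimes g d1 d2 (r - 1) p q x ∧ RunsTimes (transpose g) d2 d1 (r - 1) q p x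

/-- `x` is `E_rĒ_r`-exact: `x = ∂z + ∂∂̄ξ + ∂̄η` with `∂̄z` and `∂η`
reaching `0` in at most `r-1` steps. -/
def ErErBarExact (g : ℤ → ℤ → Submodule K V) (d1 d2 : V →ₗ[K] V) (r : ℕ) (p q : ℤ)
    (x : V) : Prop :=
  ∃ z ξ η : V, z ∈ g (p - 1) q ∧ ξ ∈ g (p - 1) (q - 1) ∧ η ∈ g p (q - 1) ∧
    x = d1 z + d1 (d2 ξ) + d2 η ∧
    (r = 1 → z = 0 ∧ η = 0) ∧
    (2 ≤ r → ReachesZero g d1 d2 (r - 1) (p - 1) q z ∧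
      ReachesZero (transpose g) d2 d1 (r - 1) (q - 1) p η)

/-- The total-degree-`k` part of the complex. -/
def TotDeg (g : ℤ → ℤ → Submodule K V) (k : ℤ) : Submodule K V := ⨆ p : ℤ, g p (k - p)

/-- `x` (of total degree `k`) is `d`-exact. -/
def DExact (g : ℤ → ℤ → Submodule K V) (d1 d2 : V →ₗ[K] V) (k : ℤ) (x : V) : Prop :=
  ∃ y ∈ TotDeg g (k - 1), x = d1 y + d2 y

/-- The De Rham cohomology in degree `k` is *full*: every `d`-closed form of total degree
`k` is, modulo `Im d`, a sum of `d`-closed pure-type forms. -/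
def DRFull (g : ℤ → ℤ → Submodule K V) (d1 d2 : V →ₗ[K] V) (k : ℤ) : Prop :=
  ∀ x ∈ TotDeg g k, d1 x + d2 x = 0 →
    ∃ (s : Finset ℤ) (c : ℤ → V),
      (∀ p ∈ s, c p ∈ g p (k - p) ∧ d1 (c p) = 0 ∧ d2 (c p) = 0) ∧
      ∃ y ∈ TotDeg g (k - 1), x = (∑ p ∈ s, c p) + (d1 y + d2 y)

/-- The De Rham cohomology in degree `k` is *pure*: the subspaces `H^{p,q}_{DR}` with
`p + q = k` are in direct sum. -/
def DRPureDeg (g : ℤ → ℤ → Submodule K V) (d1 d2 : V →ₗ[K] V) (k : ℤ) : Prop :=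
  ∀ (s : Finset ℤ) (c : ℤ → V),
    (∀ p ∈ s, c p ∈ g p (k - p) ∧ d1 (c p) = 0 ∧ d2 (c p) = 0) →
    DExact g d1 d2 k (∑ p ∈ s, c p) → ∀ p ∈ s, DExact g d1 d2 k (c p)

/-- Purity of the De Rham cohomology: `H^k_{DR} = ⊕_{p+q=k} H^{p,q}_{DR}` for every `k`. -/
def DRPure (g : ℤ → ℤ → Submodule K V) (d1 d2 : V →ₗ[K] V) : Prop :=
  (∀ k : ℤ, DRFull g d1 d2 k) ∧ ∀ k : ℤ, DRPureDeg g d1 d2 k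

/-- The (column) Frölicher spectral sequence degenerates at `E_r`: from page `r` on, the
spaces of `E_s`-closed and `E_s`-exact pure-type forms stabilise. -/
def DegenAt (g : ℤ → ℤ → Submodule K V) (d1 d2 : V →ₗ[K] V) (r : ℕ) : Prop :=
  ∀ s : ℕ, r ≤ s → ∀ p q : ℤ, ∀ x ∈ g p q,
    (ErClosed g d1 d2 s p q x ↔ ErClosed g d1 d2 (s + 1) p q x) ∧
    (ErExact g d1 d2 s p q x ↔ ErExact g d1 d2 (s + 1) p q x)

/-- `X` is a page-`r`-`∂∂̄`-manifold: the Frölicher spectral sequence degenerates at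
`E_{r+1}` and the De Rham cohomology is pure. -/
def PageDdbar (g : ℤ → ℤ → Submodule K V) (d1 d2 : V →ₗ[K] V) (r : ℕ) : Prop :=
  DegenAt g d1 d2 (r + 1) ∧ DRPure g d1 d2

/-- Dimension of a subquotient `Nm / (Dn ∩ Nm)`. -/
noncomputable def hdim (Nm Dn : Submodule K V) : ℕ :=
  Module.finrank K (↥Nm ⧸ (Dn.comap Nm.subtype))

/-- A real structure (conjugation) on the double complex of forms. -/
structure RealStructure (g : ℤ → ℤ → Submodule K V) (d1 d2 : V →ₗ[K] V) (c : V → V)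
    (σ : K → K) : Prop where
  add : ∀ x y : V, c (x + y) = c x + c y
  smul : ∀ (a : K) (x : V), c (a • x) = σ a • c x
  invol : ∀ x : V, c (c x) = x
  mem : ∀ p q : ℤ, ∀ x ∈ g p q, c x ∈ g q p
  d : ∀ x : V, c (d1 x) = d2 (c x)

/-- The double complex is concentrated in the bidegrees `0 ≤ p, q ≤ n`. -/
def BoundedBy (g : ℤ → ℤ → Submodule K V) (n : ℕ) : Prop :=
  ∀ p q : ℤ, (p < 0 ∨ q < 0 ∨ (n : ℤ) < p ∨ (n : ℤ) < q) → g p q = ⊥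

/-- Dolbeault cohomology dimension `h^{p,q}_{∂̄}`. -/
noncomputable def dolbDim (g : ℤ → ℤ → Submodule K V) (d2 : V →ₗ[K] V) (p q : ℤ) : ℕ :=
  hdim (g p q ⊓ LinearMap.ker d2) (Submodule.map d2 (g p (q - 1)))

/-- Aeppli cohomology dimension `h^{p,q}_A`,
`H^{p,q}_A = (ker ∂∂̄ ∩ C^∞_{p,q})/(Im ∂ + Im ∂̄)`. -/
noncomputable def aeppliDim (g : ℤ → ℤ → Submodule K V) (d1 d2 : V →ₗ[K] V)
    (p q : ℤ) : ℕ :=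
  hdim (g p q ⊓ LinearMap.ker (d1 ∘ₗ d2))
    (Submodule.map d1 (g (p - 1) q) ⊔ Submodule.map d2 (g p (q - 1)))

/-- The `k`-th Betti number `b_k = dim H^k_{DR}`. -/
noncomputable def bettiDim (g : ℤ → ℤ → Submodule K V) (d1 d2 : V →ₗ[K] V) (k : ℤ) : ℕ :=
  hdim (TotDeg g k ⊓ LinearMap.ker (d1 + d2)) (Submodule.map (d1 + d2) (TotDeg g (k - 1)))


section Auxiliary

open Submodule LinearMap Function

variable {K : Type} [Field K] {V : Type} [AddCommGroup V] [Module K V]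

lemma sum2_zero {t : ℤ × ℤ → Submodule K V} (hind : iSupIndep t)
    {a b : ℤ × ℤ} (hab : a ≠ b) {x y : V} (hx : x ∈ t a) (hy : y ∈ t b)
    (h : x + y = 0) : x = 0 ∧ y = 0 := by
  have hd : Disjoint (t a) (t b) := hind.pairwiseDisjoint hab
  have hx0 : x = 0 := by
    have hxy : x = -y := eq_neg_of_add_eq_zero_left h
    exact (Submodule.disjoint_def.mp hd) x hx (hxy ▸ neg_mem hy)
  refine ⟨hx0, ?_⟩
  rw [hx0, zero_add] at h
  exact h

lemma sum3_zero {t : ℤ × ℤ → Submodule K V} (hind : iSupIndep t)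
    {a b d : ℤ × ℤ} (hab : a ≠ b) (had : a ≠ d) (hbd : b ≠ d)
    {x y z : V} (hx : x ∈ t a) (hy : y ∈ t b) (hz : z ∈ t d)
    (h : x + y + z = 0) : x = 0 ∧ y = 0 ∧ z = 0 := by
  have hdisj : Disjoint (t a) (t b ⊔ t d) := by
    have h1 : Disjoint (t a) (⨆ i ∈ ({b, d} : Set (ℤ × ℤ)), t i) :=
      hind.disjoint_biSup (by simp [hab, had])
    rwa [iSup_pair] at h1
  have hx0 : x = 0 := by
    have hxy : x = -(y + z) := by
      have hh : x + (y + z) = 0 := by rw [← add_assoc]; exact h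
      exact eq_neg_of_add_eq_zero_left hh
    exact (Submodule.disjoint_def.mp hdisj) x hx (hxy ▸ neg_mem (add_mem_sup hy hz))
  rw [hx0, zero_add] at h
  obtain ⟨hy0, hz0⟩ := sum2_zero hind hbd hy hz h
  exact ⟨hx0, hy0, hz0⟩

lemma totdeg_one {g : ℤ → ℤ → Submodule K V} {n : ℕ} (hbd : BoundedBy g n) :
    TotDeg g 1 = g 1 0 ⊔ g 0 1 := by
  apply le_antisymm
  · apply iSup_le
    intro p
    by_cases h1 : p = 1
    · subst h1
      rw [show (1 : ℤ) - 1 = 0 from by norm_num]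
      exact le_sup_left
    · by_cases h0 : p = 0
      · subst h0
        rw [show (1 : ℤ) - 0 = 1 from by norm_num]
        exact le_sup_right
      · rw [hbd p (1 - p) (by omega)]
        exact bot_le
  · apply sup_le
    · have h := le_iSup (fun p : ℤ => g p (1 - p)) 1
      norm_num at h
      exact h
    · have h := le_iSup (fun p : ℤ => g p (1 - p)) 0
      norm_num at h
      exact h

lemma totdeg_zero {g : ℤ → ℤ → Submodule K V} {n : ℕ} (hbd : BoundedBy g n) :
    TotDeg g 0 = g 0 0 := by
  apply le_antisymm
  · apply iSup_le
    intro p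
    by_cases h0 : p = 0
    · subst h0
      rw [show (0 : ℤ) - 0 = 0 from by norm_num]
    · rw [hbd p (0 - p) (by omega)]
      exact bot_le
  · have h : g 0 ((0:ℤ) - 0) ≤ ⨆ p : ℤ, g p (0 - p) := le_iSup (fun p : ℤ => g p (0 - p)) 0
    rw [show (0:ℤ) - 0 = 0 from by norm_num] at h
    exact h

lemma hdim_conj {W : Type} [AddCommGroup W] [Module ℂ W] (c : W → W)
    (hadd : ∀ x y : W, c (x + y) = c x + c y)
    (hsmul : ∀ (a : ℂ) (x : W), c (a • x) = (starRingEnd ℂ) a • c x)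
    (hinv : ∀ x : W, c (c x) = x)
    (N N' D D' : Submodule ℂ W)
    (hN : ∀ x ∈ N, c x ∈ N') (hN' : ∀ x ∈ N', c x ∈ N)
    (hD : ∀ x ∈ D, c x ∈ D') (hD' : ∀ x ∈ D', c x ∈ D) :
    Module.finrank ℂ (↥N ⧸ Submodule.comap N.subtype D) =
      Module.finrank ℂ (↥N' ⧸ Submodule.comap N'.subtype D') := by
  have hsub : ∀ x y : W, c (x - y) = c x - c y := by
    intro x y
    have h1 : c (x - y) + c y = c x := by rw [← hadd, sub_add_cancel]
    exact eq_sub_of_add_eq h1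
  let C : W →ₛₗ[starRingEnd ℂ] W :=
    { toFun := c, map_add' := hadd, map_smul' := hsmul }
  let f2 : ↥N →ₛₗ[starRingEnd ℂ] ↥N' :=
    LinearMap.codRestrict N' (C.comp N.subtype) (fun x => hN x x.2)
  have hf2 : ∀ x : ↥N, (f2 x : W) = c x := fun x => rfl
  let f3 := (Submodule.comap N'.subtype D').mkQ.comp f2
  have hker : Submodule.comap N.subtype D ≤ LinearMap.ker f3 := by
    intro x hx
    have hmem : (f2 x : W) ∈ D' := hD _ hx
    simp only [f3, LinearMap.mem_ker, LinearMap.comp_apply, Submodule.mkQ_apply,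
      Submodule.Quotient.mk_eq_zero, Submodule.mem_comap]
    exact hmem
  let Φ := Submodule.liftQ _ f3 hker
  have hΦmk : ∀ x : ↥N, Φ (Submodule.Quotient.mk x) = Submodule.Quotient.mk (f2 x) := by
    intro x; simp [Φ, f3, Submodule.liftQ_apply]
  have hsurj : Function.Surjective Φ := by
    intro z
    obtain ⟨y, rfl⟩ := Submodule.Quotient.mk_surjective _ z
    refine ⟨Submodule.Quotient.mk (⟨c y, hN' y y.2⟩ : ↥N), ?_⟩
    rw [hΦmk]
    congr 1
    apply Subtype.ext
    show c (c (y : W)) = (y : W)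
    exact hinv _
  have hinj : Function.Injective Φ := by
    intro z1 z2 h12
    obtain ⟨y1, rfl⟩ := Submodule.Quotient.mk_surjective _ z1
    obtain ⟨y2, rfl⟩ := Submodule.Quotient.mk_surjective _ z2
    rw [hΦmk, hΦmk] at h12
    have hD'mem : ((f2 y1 - f2 y2 : ↥N') : W) ∈ D' := by
      have h := (Submodule.Quotient.eq (Submodule.comap N'.subtype D')).mp h12
      simpa using h
    have hDm : c ((f2 y1 - f2 y2 : ↥N') : W) ∈ D := hD' _ hD'mem
    rw [Submodule.coe_sub, hf2, hf2, hsub, hinv, hinv] at hDm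
    rw [Submodule.Quotient.eq]
    simpa using hDm
  have hσbij : Function.Bijective (⇑(starRingEnd ℂ)) :=
    Function.Involutive.bijective (fun z => Complex.conj_conj z)
  let j := AddEquiv.ofBijective Φ.toAddMonoidHom ⟨hinj, hsurj⟩
  have hrank := rank_eq_of_equiv_equiv (R := ℂ) (R' := ℂ)
    (⇑(starRingEnd ℂ)) j hσbij
    (fun r m => Φ.map_smulₛₗ r m)
  unfold Module.finrank
  rw [hrank]

end Auxiliary

set_option maxHeartbeats 1000000 in
set_option synthInstance.maxHeartbeats 400000 in
/-- Let `X` be a compact complex manifold with `b₁ = 4`,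
`h^{1,0}_{∂̄} = h^{0,1}_{∂̄} = 2` and `h^{1,0}_A = 3`.  Then either `H¹_{DR}(X,ℂ)` or
`H²_{DR}(X,ℂ)` fails to be pure (pure = the `H^{p,q}_{DR}` are in direct sum and fill out
the whole space). -/
theorem statement7 {W : Type} [AddCommGroup W] [Module ℂ W]
    (g : ℤ → ℤ → Submodule ℂ W) (d1 d2 : W →ₗ[ℂ] W) (c : W → W) (n : ℕ)
    (hdc : IsBigradedDC g d1 d2)
    (hreal : RealStructure g d1 d2 c (starRingEnd ℂ))
    (hbd : BoundedBy g n)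
    (hb1 : bettiDim g d1 d2 1 = 4)
    (h10 : dolbDim g d2 1 0 = 2) (h01 : dolbDim g d2 0 1 = 2)
    (hA10 : aeppliDim g d1 d2 1 0 = 3) :
    ¬ (DRFull g d1 d2 1 ∧ DRPureDeg g d1 d2 1) ∨
      ¬ (DRFull g d1 d2 2 ∧ DRPureDeg g d1 d2 2) := by
  classical
  by_contra hcon
  push_neg at hcon
  obtain ⟨⟨hFull1, hPure1⟩, hFull2, hPure2⟩ := hcon
  have hind : iSupIndep (fun pq : ℤ × ℤ => g pq.1 pq.2) := hdc.internal.submodule_iSupIndep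
  -- conjugation basics
  have hc0 : c 0 = 0 := by
    have h : c 0 + 0 = c 0 + c 0 := by
      rw [add_zero]
      have h2 := hreal.add 0 0
      rwa [add_zero] at h2
    exact (add_left_cancel h).symm
  have hcd1 : ∀ x, c (d1 x) = d2 (c x) := hreal.d
  have hcd2 : ∀ x, c (d2 x) = d1 (c x) := by
    intro x
    have h := hreal.d (c x)
    rw [hreal.invol] at h
    have h2 := congrArg c h
    rw [hreal.invol] at h2
    exact h2.symm
  -- membership helpers
  have hd1_10 : ∀ x ∈ g 1 0, d1 x ∈ g 2 0 := by
    intro x hx; have h := hdc.d1_mem 1 0 x hx; norm_num at h; exact h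
  have hd2_10 : ∀ x ∈ g 1 0, d2 x ∈ g 1 1 := by
    intro x hx; have h := hdc.d2_mem 1 0 x hx; norm_num at h; exact h
  have hd1_01 : ∀ x ∈ g 0 1, d1 x ∈ g 1 1 := by
    intro x hx; have h := hdc.d1_mem 0 1 x hx; norm_num at h; exact h
  have hd2_01 : ∀ x ∈ g 0 1, d2 x ∈ g 0 2 := by
    intro x hx; have h := hdc.d2_mem 0 1 x hx; norm_num at h; exact h
  have hd1_00 : ∀ x ∈ g 0 0, d1 x ∈ g 1 0 := by
    intro x hx; have h := hdc.d1_mem 0 0 x hx; norm_num at h; exact h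
  have hd2_00 : ∀ x ∈ g 0 0, d2 x ∈ g 0 1 := by
    intro x hx; have h := hdc.d2_mem 0 0 x hx; norm_num at h; exact h
  have tot1 : TotDeg g 1 = g 1 0 ⊔ g 0 1 := totdeg_one hbd
  have tot0 : TotDeg g 0 = g 0 0 := totdeg_zero hbd
  -- extract dimension data
  have hQ2 : Module.finrank ℂ ↥(g 1 0 ⊓ LinearMap.ker d2) = 2 := by
    unfold dolbDim hdim at h10
    rw [show g 1 ((0:ℤ) - 1) = ⊥ from hbd _ _ (by norm_num), Submodule.map_bot,
      Submodule.comap_bot, Submodule.ker_subtype] at h10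
    rw [← (Submodule.quotEquivOfEqBot _ rfl).finrank_eq]
    exact h10
  have hHq2 : Module.finrank ℂ
      (↥(g 0 1 ⊓ LinearMap.ker d2) ⧸
        Submodule.comap (g 0 1 ⊓ LinearMap.ker d2).subtype (Submodule.map d2 (g 0 0))) = 2 := by
    unfold dolbDim hdim at h01
    exact h01
  have hH4 : Module.finrank ℂ
      (↥(TotDeg g 1 ⊓ LinearMap.ker (d1 + d2)) ⧸
        Submodule.comap (TotDeg g 1 ⊓ LinearMap.ker (d1 + d2)).subtype
          (Submodule.map (d1 + d2) (TotDeg g 0))) = 4 := by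
    unfold bettiDim hdim at hb1
    exact hb1
  have hNa3 : Module.finrank ℂ
      (↥(g 1 0 ⊓ LinearMap.ker (d1 ∘ₗ d2)) ⧸
        Submodule.comap (g 1 0 ⊓ LinearMap.ker (d1 ∘ₗ d2)).subtype
          (Submodule.map d1 (g 0 0))) = 3 := by
    unfold aeppliDim hdim at hA10
    rw [show (1:ℤ) - 1 = 0 from by norm_num, show (0:ℤ) - 1 = -1 from by norm_num,
      show g 1 ((-1):ℤ) = ⊥ from hbd _ _ (by norm_num), Submodule.map_bot, sup_bot_eq] at hA10
    exact hA10
  have hP2 : Module.finrank ℂ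
      (↥(g 1 0 ⊓ LinearMap.ker d1) ⧸
        Submodule.comap (g 1 0 ⊓ LinearMap.ker d1).subtype (Submodule.map d1 (g 0 0))) = 2 := by
    rw [← hHq2]
    refine (hdim_conj c hreal.add hreal.smul hreal.invol _ _ _ _ ?_ ?_ ?_ ?_).symm
    · rintro x ⟨hx1, hx2⟩
      refine ⟨hreal.mem 0 1 x hx1, ?_⟩
      show d1 (c x) = 0
      rw [← hcd2 x, show d2 x = 0 from hx2]
      exact hc0
    · rintro x ⟨hx1, hx2⟩
      refine ⟨hreal.mem 1 0 x hx1, ?_⟩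
      show d2 (c x) = 0
      rw [← hcd1 x, show d1 x = 0 from hx2]
      exact hc0
    · rintro x ⟨f, hf, rfl⟩
      exact ⟨c f, hreal.mem 0 0 f hf, (hcd2 f).symm⟩
    · rintro x ⟨f, hf, rfl⟩
      exact ⟨c f, hreal.mem 0 0 f hf, (hcd1 f).symm⟩
  -- finite-dimensionality instances
  haveI instQ : FiniteDimensional ℂ ↥(g 1 0 ⊓ LinearMap.ker d2) :=
    Module.finite_of_finrank_pos (by rw [hQ2]; norm_num)
  haveI instHq : FiniteDimensional ℂ
      (↥(g 0 1 ⊓ LinearMap.ker d2) ⧸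
        Submodule.comap (g 0 1 ⊓ LinearMap.ker d2).subtype (Submodule.map d2 (g 0 0))) :=
    Module.finite_of_finrank_pos (by rw [hHq2]; norm_num)
  haveI instH : FiniteDimensional ℂ
      (↥(TotDeg g 1 ⊓ LinearMap.ker (d1 + d2)) ⧸
        Submodule.comap (TotDeg g 1 ⊓ LinearMap.ker (d1 + d2)).subtype
          (Submodule.map (d1 + d2) (TotDeg g 0))) :=
    Module.finite_of_finrank_pos (by rw [hH4]; norm_num)
  haveI instPq : FiniteDimensional ℂ
      (↥(g 1 0 ⊓ LinearMap.ker d1) ⧸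
        Submodule.comap (g 1 0 ⊓ LinearMap.ker d1).subtype (Submodule.map d1 (g 0 0))) :=
    Module.finite_of_finrank_pos (by rw [hP2]; norm_num)
  have hRQle : g 1 0 ⊓ LinearMap.ker d1 ⊓ LinearMap.ker d2 ≤ g 1 0 ⊓ LinearMap.ker d2 :=
    le_inf (inf_le_left.trans inf_le_left) inf_le_right
  haveI instR : FiniteDimensional ℂ ↥(g 1 0 ⊓ LinearMap.ker d1 ⊓ LinearMap.ker d2) :=
    Submodule.finiteDimensional_of_le hRQle
  -- the decomposition of `g 1 0 ⊔ g 0 1` and the projection onto the `(0,1)` part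
  have hABdisj : g 1 0 ⊓ g 0 1 = ⊥ := by
    rw [eq_bot_iff]
    rintro x ⟨hx1, hx2⟩
    have hd : Disjoint ((fun pq : ℤ × ℤ => g pq.1 pq.2) (1, 0))
        ((fun pq : ℤ × ℤ => g pq.1 pq.2) (0, 1)) :=
      hind.pairwiseDisjoint (by decide)
    simpa using (Submodule.disjoint_def.mp hd) x hx1 hx2
  have hcompl : IsCompl (Submodule.comap (g 1 0 ⊔ g 0 1).subtype (g 1 0))
      (Submodule.comap (g 1 0 ⊔ g 0 1).subtype (g 0 1)) := by
    constructor
    · rw [disjoint_iff, ← Submodule.comap_inf, hABdisj, Submodule.comap_bot,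
        Submodule.ker_subtype]
    · rw [codisjoint_iff, eq_top_iff]
      rintro ⟨x, hx⟩ -
      obtain ⟨a, ha, b, hb, hab⟩ := Submodule.mem_sup.mp hx
      have hxe : (⟨x, hx⟩ : ↥(g 1 0 ⊔ g 0 1)) =
          ⟨a, Submodule.mem_sup_left ha⟩ + ⟨b, Submodule.mem_sup_right hb⟩ :=
        Subtype.ext (by simpa using hab.symm)
      rw [hxe]
      exact Submodule.add_mem_sup ha hb
  set prmap : ↥(g 1 0 ⊔ g 0 1) →ₗ[ℂ] W :=
    (g 1 0 ⊔ g 0 1).subtype.comp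
      ((Submodule.comap (g 1 0 ⊔ g 0 1).subtype (g 0 1)).subtype.comp
        (Submodule.linearProjOfIsCompl _ _ hcompl.symm)) with hprmap_def
  have hpr : ∀ (x : ↥(g 1 0 ⊔ g 0 1)) (a b : W), a ∈ g 1 0 → b ∈ g 0 1 → (x : W) = a + b →
      prmap x = b := by
    intro x a b ha hb hxab
    have hxa : x = ⟨a, Submodule.mem_sup_left ha⟩ + ⟨b, Submodule.mem_sup_right hb⟩ :=
      Subtype.ext (by simpa using hxab)
    have h1 : Submodule.linearProjOfIsCompl _ _ hcompl.symm
        (⟨a, Submodule.mem_sup_left ha⟩ : ↥(g 1 0 ⊔ g 0 1)) = 0 :=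
      Submodule.projectionOnto_apply_of_mem_right hcompl.symm ha
    have h2 : Submodule.linearProjOfIsCompl _ _ hcompl.symm
        (⟨b, Submodule.mem_sup_right hb⟩ : ↥(g 1 0 ⊔ g 0 1)) =
        ⟨⟨b, Submodule.mem_sup_right hb⟩, hb⟩ :=
      Submodule.linearProjOfIsCompl_apply_left hcompl.symm
        (⟨⟨b, Submodule.mem_sup_right hb⟩, hb⟩ :
          ↥(Submodule.comap (g 1 0 ⊔ g 0 1).subtype (g 0 1)))
    rw [hprmap_def]
    simp only [LinearMap.comp_apply]
    rw [hxa, map_add, h1, zero_add, h2]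
    rfl
  have hKKle : TotDeg g 1 ⊓ LinearMap.ker (d1 + d2) ≤ g 1 0 ⊔ g 0 1 := by
    rw [← tot1]; exact inf_le_left
  set ν : ↥(TotDeg g 1 ⊓ LinearMap.ker (d1 + d2)) →ₗ[ℂ] W :=
    prmap.comp (Submodule.inclusion hKKle) with hν_def
  have hν : ∀ (x : ↥(TotDeg g 1 ⊓ LinearMap.ker (d1 + d2))) (a b : W),
      a ∈ g 1 0 → b ∈ g 0 1 → (x : W) = a + b → ν x = b := by
    intro x a b ha hb h
    rw [hν_def]
    exact hpr (Submodule.inclusion hKKle x) a b ha hb h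
  have hdecomp : ∀ x : ↥(TotDeg g 1 ⊓ LinearMap.ker (d1 + d2)),
      ∃ a b : W, a ∈ g 1 0 ∧ b ∈ g 0 1 ∧ (x : W) = a + b ∧
        d1 a = 0 ∧ d2 a + d1 b = 0 ∧ d2 b = 0 := by
    intro x
    obtain ⟨a, ha, b, hb, hab⟩ := Submodule.mem_sup.mp (hKKle x.2)
    have hk : (d1 + d2) (x : W) = 0 := x.2.2
    rw [LinearMap.add_apply] at hk
    have h3 : d1 a + (d2 a + d1 b) + d2 b = 0 := by
      have he : d1 a + (d2 a + d1 b) + d2 b = d1 (a + b) + d2 (a + b) := by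
        rw [map_add, map_add]; abel
      rw [hab] at he
      exact he.trans hk
    obtain ⟨hz1, hz2, hz3⟩ := sum3_zero hind (a := ((2:ℤ),(0:ℤ))) (b := ((1:ℤ),(1:ℤ)))
      (d := ((0:ℤ),(2:ℤ))) (by decide) (by decide) (by decide)
      (hd1_10 a ha) (add_mem (hd2_10 a ha) (hd1_01 b hb)) (hd2_01 b hb) h3
    exact ⟨a, b, ha, hb, hab.symm, hz1, hz2, hz3⟩
  have hνmem : ∀ x : ↥(TotDeg g 1 ⊓ LinearMap.ker (d1 + d2)),
      ν x ∈ g 0 1 ⊓ LinearMap.ker d2 := by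
    intro x
    obtain ⟨a, b, ha, hb, hab, hz1, hz2, hz3⟩ := hdecomp x
    rw [hν x a b ha hb hab]
    exact ⟨hb, hz3⟩
  set π0 := LinearMap.codRestrict (g 0 1 ⊓ LinearMap.ker d2) ν hνmem with hπ0_def
  have hπ0coe : ∀ x, ((π0 x : ↥(g 0 1 ⊓ LinearMap.ker d2)) : W) = ν x := fun x => rfl
  have hπker : Submodule.comap (TotDeg g 1 ⊓ LinearMap.ker (d1 + d2)).subtype
      (Submodule.map (d1 + d2) (TotDeg g 0)) ≤
      LinearMap.ker ((Submodule.comap (g 0 1 ⊓ LinearMap.ker d2).subtype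
        (Submodule.map d2 (g 0 0))).mkQ.comp π0) := by
    intro x hx
    obtain ⟨f, hf, hfx⟩ := hx
    rw [tot0] at hf
    have hνx : ν x = d2 f := by
      apply hν x (d1 f) (d2 f) (hd1_00 f hf) (hd2_00 f hf)
      have hfx' : (d1 + d2) f = (x : W) := hfx
      rw [← hfx', LinearMap.add_apply]
    rw [LinearMap.mem_ker, LinearMap.comp_apply, Submodule.mkQ_apply,
      Submodule.Quotient.mk_eq_zero, Submodule.mem_comap]
    show ((π0 x : ↥(g 0 1 ⊓ LinearMap.ker d2)) : W) ∈ Submodule.map d2 (g 0 0)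
    rw [hπ0coe, hνx]
    exact ⟨f, hf, rfl⟩
  set π := Submodule.liftQ _ ((Submodule.comap (g 0 1 ⊓ LinearMap.ker d2).subtype
      (Submodule.map d2 (g 0 0))).mkQ.comp π0) hπker with hπ_def
  have hπmk : ∀ x : ↥(TotDeg g 1 ⊓ LinearMap.ker (d1 + d2)),
      π (Submodule.Quotient.mk x) = Submodule.Quotient.mk (π0 x) := by
    intro x
    rw [hπ_def, Submodule.liftQ_apply, LinearMap.comp_apply, Submodule.mkQ_apply]
  have hRKK : g 1 0 ⊓ LinearMap.ker d1 ⊓ LinearMap.ker d2 ≤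
      TotDeg g 1 ⊓ LinearMap.ker (d1 + d2) := by
    rintro x ⟨⟨hx1, hx2⟩, hx3⟩
    refine ⟨?_, ?_⟩
    · rw [tot1]; exact Submodule.mem_sup_left hx1
    · show (d1 + d2) x = 0
      rw [LinearMap.add_apply, show d1 x = 0 from hx2, show d2 x = 0 from hx3, add_zero]
  set ρ := (Submodule.comap (TotDeg g 1 ⊓ LinearMap.ker (d1 + d2)).subtype
      (Submodule.map (d1 + d2) (TotDeg g 0))).mkQ.comp (Submodule.inclusion hRKK) with hρ_def
  have hR'B2 : g 0 1 ⊓ LinearMap.ker d1 ⊓ LinearMap.ker d2 ≤ g 0 1 ⊓ LinearMap.ker d2 := by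
    rintro x ⟨⟨hx1, _⟩, hx3⟩; exact ⟨hx1, hx3⟩
  set τ := (Submodule.comap (g 0 1 ⊓ LinearMap.ker d2).subtype
      (Submodule.map d2 (g 0 0))).mkQ.comp (Submodule.inclusion hR'B2) with hτ_def
  -- extraction of pure closed components from `DRFull 1`
  have hext : ∀ x : ↥(TotDeg g 1 ⊓ LinearMap.ker (d1 + d2)),
      ∃ u v f : W, u ∈ g 1 0 ⊓ LinearMap.ker d1 ⊓ LinearMap.ker d2 ∧
        v ∈ g 0 1 ⊓ LinearMap.ker d1 ⊓ LinearMap.ker d2 ∧ f ∈ g 0 0 ∧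
        (x : W) = u + v + (d1 f + d2 f) := by
    intro x
    have hcl : d1 ((x : W)) + d2 ((x : W)) = 0 := by
      have hk : (d1 + d2) (x : W) = 0 := x.2.2
      rwa [LinearMap.add_apply] at hk
    obtain ⟨s, cc, hcc, y, hy, hxeq⟩ := hFull1 (x : W) x.2.1 hcl
    rw [show (1:ℤ) - 1 = 0 from by norm_num, tot0] at hy
    have hrw : ∀ p ∈ s, cc p =
        (if p = 1 then (if (1:ℤ) ∈ s then cc 1 else 0) else 0) +
        (if p = 0 then (if (0:ℤ) ∈ s then cc 0 else 0) else 0) := by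
      intro p hp
      by_cases h1 : p = 1
      · subst h1; simp [hp]
      · by_cases h0 : p = 0
        · subst h0; simp [hp, h1]
        · have hbmem : cc p ∈ g p (1 - p) := (hcc p hp).1
          rw [hbd p (1 - p) (by omega)] at hbmem
          simp [h1, h0, (Submodule.mem_bot ℂ).mp hbmem]
    have hsum : ∑ p ∈ s, cc p =
        (if (1:ℤ) ∈ s then cc 1 else 0) + (if (0:ℤ) ∈ s then cc 0 else 0) := by
      rw [Finset.sum_congr rfl hrw, Finset.sum_add_distrib,
        Finset.sum_ite_eq' s (1:ℤ), Finset.sum_ite_eq' s (0:ℤ)]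
      by_cases h1 : (1:ℤ) ∈ s <;> by_cases h0 : (0:ℤ) ∈ s <;> simp [h1, h0]
    refine ⟨(if (1:ℤ) ∈ s then cc 1 else 0), (if (0:ℤ) ∈ s then cc 0 else 0), y, ?_, ?_, hy, ?_⟩
    · by_cases h1 : (1:ℤ) ∈ s
      · simp only [if_pos h1]
        obtain ⟨hm, hk1, hk2⟩ := hcc 1 h1
        rw [show (1:ℤ) - 1 = 0 from by norm_num] at hm
        exact ⟨⟨hm, hk1⟩, hk2⟩
      · simp only [if_neg h1]; exact zero_mem _
    · by_cases h0 : (0:ℤ) ∈ s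
      · simp only [if_pos h0]
        obtain ⟨hm, hk1, hk2⟩ := hcc 0 h0
        rw [show (1:ℤ) - 0 = 1 from by norm_num] at hm
        exact ⟨⟨hm, hk1⟩, hk2⟩
      · simp only [if_neg h0]; exact zero_mem _
    · rw [hxeq, hsum]
  -- range π ≤ range τ
  have hT : LinearMap.range π ≤ LinearMap.range τ := by
    rintro z ⟨xq, rfl⟩
    obtain ⟨x, rfl⟩ := Submodule.Quotient.mk_surjective _ xq
    obtain ⟨u, v, f, hu, hv, hf, hxuv⟩ := hext x
    have hνx : ν x = v + d2 f := by
      apply hν x (u + d1 f) (v + d2 f) (add_mem hu.1.1 (hd1_00 f hf))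
        (add_mem hv.1.1 (hd2_00 f hf))
      rw [hxuv]; abel
    rw [hπmk]
    refine ⟨⟨v, hv⟩, ?_⟩
    rw [hτ_def, LinearMap.comp_apply, Submodule.mkQ_apply]
    rw [Submodule.Quotient.eq]
    have hval : ((Submodule.inclusion hR'B2 ⟨v, hv⟩ - π0 x :
        ↥(g 0 1 ⊓ LinearMap.ker d2)) : W) = -(d2 f) := by
      rw [Submodule.coe_sub]
      rw [show ((Submodule.inclusion hR'B2 ⟨v, hv⟩ : ↥(g 0 1 ⊓ LinearMap.ker d2)) : W) = v
        from rfl, hπ0coe, hνx]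
      abel
    show ((Submodule.inclusion hR'B2 ⟨v, hv⟩ - π0 x : ↥(g 0 1 ⊓ LinearMap.ker d2)) : W) ∈
      Submodule.map d2 (g 0 0)
    rw [hval]
    exact neg_mem ⟨f, hf, rfl⟩
  -- ker π ≤ range ρ
  have hK : LinearMap.ker π ≤ LinearMap.range ρ := by
    rintro xq hxq
    obtain ⟨x, rfl⟩ := Submodule.Quotient.mk_surjective _ xq
    rw [LinearMap.mem_ker, hπmk] at hxq
    have hmem : ν x ∈ Submodule.map d2 (g 0 0) := by
      have h := (Submodule.Quotient.mk_eq_zero _).mp hxq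
      rw [Submodule.mem_comap] at h
      rwa [show ((g 0 1 ⊓ LinearMap.ker d2).subtype (π0 x)) = ν x from rfl] at h
    obtain ⟨f, hf, hfν⟩ := hmem
    obtain ⟨a, b, ha, hb, hab, hz1, hz2, hz3⟩ := hdecomp x
    have hbv : b = d2 f := by
      rw [← hν x a b ha hb hab, ← hfν]
    have hx'm : a - d1 f ∈ g 1 0 := sub_mem ha (hd1_00 f hf)
    have hcl' : d1 (a - d1 f) + d2 (a - d1 f) = 0 := by
      have h2a : d2 a = -(d1 b) := eq_neg_of_add_eq_zero_left hz2
      have hdf : d1 (d2 f) = -(d2 (d1 f)) := eq_neg_of_add_eq_zero_left (hdc.anticomm f)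
      rw [map_sub, map_sub, hz1, hdc.d1_sq f, h2a, hbv, hdf]
      abel
    obtain ⟨hy1, hy2⟩ := sum2_zero hind (a := ((2:ℤ),(0:ℤ))) (b := ((1:ℤ),(1:ℤ))) (by decide)
      (hd1_10 _ hx'm) (hd2_10 _ hx'm) hcl'
    refine ⟨⟨a - d1 f, ⟨⟨hx'm, hy1⟩, hy2⟩⟩, ?_⟩
    rw [hρ_def, LinearMap.comp_apply, Submodule.mkQ_apply]
    rw [Submodule.Quotient.eq]
    have hval : ((Submodule.inclusion hRKK ⟨a - d1 f, ⟨⟨hx'm, hy1⟩, hy2⟩⟩ - x :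
        ↥(TotDeg g 1 ⊓ LinearMap.ker (d1 + d2))) : W) = -((d1 + d2) f) := by
      rw [Submodule.coe_sub]
      rw [show ((Submodule.inclusion hRKK ⟨a - d1 f, ⟨⟨hx'm, hy1⟩, hy2⟩⟩ :
        ↥(TotDeg g 1 ⊓ LinearMap.ker (d1 + d2))) : W) = a - d1 f from rfl]
      rw [hab, hbv, LinearMap.add_apply]
      abel
    show ((Submodule.inclusion hRKK ⟨a - d1 f, ⟨⟨hx'm, hy1⟩, hy2⟩⟩ - x :
        ↥(TotDeg g 1 ⊓ LinearMap.ker (d1 + d2))) : W) ∈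
      Submodule.map (d1 + d2) (TotDeg g 0)
    rw [hval]
    refine neg_mem ⟨f, ?_, rfl⟩
    rw [tot0]
    exact hf
  -- dimension count on degree 1
  have hrange_le2 : Module.finrank ℂ ↥(LinearMap.range π) ≤ 2 := by
    rw [← hHq2]; exact Submodule.finrank_le _
  have hker_le2 : Module.finrank ℂ ↥(LinearMap.ker π) ≤ 2 := by
    calc Module.finrank ℂ ↥(LinearMap.ker π)
        ≤ Module.finrank ℂ ↥(LinearMap.range ρ) := Submodule.finrank_mono hK
      _ ≤ Module.finrank ℂ ↥(g 1 0 ⊓ LinearMap.ker d1 ⊓ LinearMap.ker d2) :=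
          LinearMap.finrank_range_le ρ
      _ ≤ Module.finrank ℂ ↥(g 1 0 ⊓ LinearMap.ker d2) := Submodule.finrank_mono hRQle
      _ = 2 := hQ2
  have hrn := LinearMap.finrank_range_add_finrank_ker π
  rw [hH4] at hrn
  have hker_ge2 : 2 ≤ Module.finrank ℂ ↥(LinearMap.ker π) := by omega
  have hTtop : LinearMap.range τ = ⊤ := by
    apply Submodule.eq_top_of_finrank_eq
    have hle : Module.finrank ℂ ↥(LinearMap.range τ) ≤ 2 := by
      rw [← hHq2]; exact Submodule.finrank_le _
    have hge : 2 ≤ Module.finrank ℂ ↥(LinearMap.range τ) := by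
      have h2 : 2 ≤ Module.finrank ℂ ↥(LinearMap.range π) := by omega
      exact le_trans h2 (Submodule.finrank_mono hT)
    rw [hHq2]
    omega
  have hRge2 : 2 ≤ Module.finrank ℂ ↥(g 1 0 ⊓ LinearMap.ker d1 ⊓ LinearMap.ker d2) := by
    calc (2:ℕ) ≤ Module.finrank ℂ ↥(LinearMap.ker π) := hker_ge2
      _ ≤ Module.finrank ℂ ↥(LinearMap.range ρ) := Submodule.finrank_mono hK
      _ ≤ _ := LinearMap.finrank_range_le ρ
  -- every ∂̄-closed (0,1)-form decomposes
  have hB2dec : ∀ β ∈ g 0 1 ⊓ LinearMap.ker d2, ∃ v f : W,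
      v ∈ g 0 1 ⊓ LinearMap.ker d1 ⊓ LinearMap.ker d2 ∧ f ∈ g 0 0 ∧ β = v + d2 f := by
    intro β hβ
    have hmem : Submodule.Quotient.mk (⟨β, hβ⟩ : ↥(g 0 1 ⊓ LinearMap.ker d2)) ∈
        LinearMap.range τ := by
      rw [hTtop]; trivial
    obtain ⟨v, hveq⟩ := hmem
    rw [hτ_def, LinearMap.comp_apply, Submodule.mkQ_apply] at hveq
    have hsub := (Submodule.Quotient.eq _).mp hveq
    have hsub' : (v : W) - β ∈ Submodule.map d2 (g 0 0) := by
      rw [Submodule.mem_comap] at hsub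
      rwa [show ((g 0 1 ⊓ LinearMap.ker d2).subtype
        (Submodule.inclusion hR'B2 v - ⟨β, hβ⟩)) = (v : W) - β from rfl] at hsub
    obtain ⟨f, hf, hfe⟩ := hsub'
    refine ⟨v, -f, v.2, neg_mem hf, ?_⟩
    rw [map_neg, hfe]
    abel
  -- the key identity : ker(∂∂̄) ∩ (1,0) = (ker ∂ ∩ (1,0)) + (ker ∂̄ ∩ (1,0))
  have hNa : g 1 0 ⊓ LinearMap.ker (d1 ∘ₗ d2) =
      (g 1 0 ⊓ LinearMap.ker d1) ⊔ (g 1 0 ⊓ LinearMap.ker d2) := by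
    apply le_antisymm
    · rintro α ⟨hα1, hα2⟩
      have hα2' : d1 (d2 α) = 0 := hα2
      have hω : d2 α ∈ g 1 1 := hd2_10 α hα1
      have hγ : d1 α ∈ g 2 0 := hd1_10 α hα1
      have hγd2 : d2 (d1 α) = 0 := by
        have h := hdc.anticomm α
        rwa [hα2', zero_add] at h
      have hcprop : ∀ p ∈ ({1, 2} : Finset ℤ),
          (if p = 1 then d2 α else d1 α) ∈ g p (2 - p) ∧
          d1 (if p = 1 then d2 α else d1 α) = 0 ∧ d2 (if p = 1 then d2 α else d1 α) = 0 := by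
        intro p hp
        rcases Finset.mem_insert.mp hp with h | h
        · subst h
          simp only [if_pos rfl]
          refine ⟨?_, hα2', hdc.d2_sq α⟩
          rw [show (2:ℤ) - 1 = 1 from by norm_num]
          exact hω
        · rw [Finset.mem_singleton] at h
          subst h
          simp only [if_neg (by norm_num : (2:ℤ) ≠ 1)]
          refine ⟨?_, hdc.d1_sq α, hγd2⟩
          rw [show (2:ℤ) - 2 = 0 from by norm_num]
          exact hγ
      have hde : DExact g d1 d2 2 (∑ p ∈ ({1, 2} : Finset ℤ), (if p = 1 then d2 α else d1 α)) := by
        rw [Finset.sum_pair (by norm_num : (1:ℤ) ≠ 2)]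
        refine ⟨α, ?_, ?_⟩
        · rw [show (2:ℤ) - 1 = 1 from by norm_num, tot1]
          exact Submodule.mem_sup_left hα1
        · rw [show (if (1:ℤ) = 1 then d2 α else d1 α) = d2 α from by norm_num,
            show (if (2:ℤ) = 1 then d2 α else d1 α) = d1 α from by norm_num, add_comm]
      have hexω := hPure2 {1, 2} _ hcprop hde 1 (by simp)
      rw [show (if (1:ℤ) = 1 then d2 α else d1 α) = d2 α from by norm_num] at hexω
      obtain ⟨y, hy, hωeq⟩ := hexω
      rw [show (2:ℤ) - 1 = 1 from by norm_num, tot1] at hy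
      obtain ⟨y1, hy1, y0, hy0, hyeq⟩ := Submodule.mem_sup.mp hy
      have h3 : d1 y1 + (d2 y1 + d1 y0 - d2 α) + d2 y0 = 0 := by
        have he : d1 y1 + (d2 y1 + d1 y0 - d2 α) + d2 y0
            = (d1 (y1 + y0) + d2 (y1 + y0)) - d2 α := by
          rw [map_add, map_add]; abel
        rw [hyeq] at he
        rw [he, ← hωeq, sub_self]
      obtain ⟨hz1, hz2, hz3⟩ := sum3_zero hind (a := ((2:ℤ),(0:ℤ))) (b := ((1:ℤ),(1:ℤ)))
        (d := ((0:ℤ),(2:ℤ))) (by decide) (by decide) (by decide)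
        (hd1_10 y1 hy1) (sub_mem (add_mem (hd2_10 y1 hy1) (hd1_01 y0 hy0)) hω)
        (hd2_01 y0 hy0) h3
      obtain ⟨v, f, hv, hf, hy0eq⟩ := hB2dec y0 ⟨hy0, hz3⟩
      have hd1y0 : d1 y0 = -(d2 (d1 f)) := by
        have hdv : d1 (v : W) = 0 := hv.1.2
        have hanti := hdc.anticomm f
        rw [hy0eq, map_add, hdv, zero_add]
        exact eq_neg_of_add_eq_zero_left hanti
      apply Submodule.mem_sup.mpr
      refine ⟨y1 - d1 f, ⟨sub_mem hy1 (hd1_00 f hf), ?_⟩,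
        α - (y1 - d1 f), ⟨sub_mem hα1 (sub_mem hy1 (hd1_00 f hf)), ?_⟩, by abel⟩
      · show d1 (y1 - d1 f) = 0
        rw [map_sub, hz1, hdc.d1_sq f, sub_zero]
      · show d2 (α - (y1 - d1 f)) = 0
        have h2α : d2 y1 + d1 y0 = d2 α := sub_eq_zero.mp hz2
        rw [map_sub, map_sub, ← h2α, hd1y0]
        abel
    · apply sup_le
      · rintro x ⟨hx1, hx2⟩
        refine ⟨hx1, ?_⟩
        show d1 (d2 x) = 0
        have h := hdc.anticomm x
        rw [show d1 x = 0 from hx2, map_zero, add_zero] at h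
        exact h
      · rintro x ⟨hx1, hx2⟩
        refine ⟨hx1, ?_⟩
        show d1 (d2 x) = 0
        rw [show d2 x = 0 from hx2, map_zero]
  -- transfer the Aeppli dimension
  have hM3 : Module.finrank ℂ
      (↥((g 1 0 ⊓ LinearMap.ker d1) ⊔ (g 1 0 ⊓ LinearMap.ker d2)) ⧸
        Submodule.comap ((g 1 0 ⊓ LinearMap.ker d1) ⊔ (g 1 0 ⊓ LinearMap.ker d2)).subtype
          (Submodule.map d1 (g 0 0))) = 3 := by
    rw [← hNa]
    exact hNa3
  haveI instM : FiniteDimensional ℂ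
      (↥((g 1 0 ⊓ LinearMap.ker d1) ⊔ (g 1 0 ⊓ LinearMap.ker d2)) ⧸
        Submodule.comap ((g 1 0 ⊓ LinearMap.ker d1) ⊔ (g 1 0 ⊓ LinearMap.ker d2)).subtype
          (Submodule.map d1 (g 0 0))) :=
    Module.finite_of_finrank_pos (by rw [hM3]; norm_num)
  -- the tower computation
  have hIP : Submodule.map d1 (g 0 0) ≤ g 1 0 ⊓ LinearMap.ker d1 := by
    rintro x ⟨f, hf, rfl⟩
    exact ⟨hd1_00 f hf, hdc.d1_sq f⟩
  have hPle : g 1 0 ⊓ LinearMap.ker d1 ≤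
      (g 1 0 ⊓ LinearMap.ker d1) ⊔ (g 1 0 ⊓ LinearMap.ker d2) := le_sup_left
  set p0 := Submodule.comap ((g 1 0 ⊓ LinearMap.ker d1) ⊔ (g 1 0 ⊓ LinearMap.ker d2)).subtype
      (Submodule.map d1 (g 0 0)) with hp0_def
  set q0 := Submodule.comap ((g 1 0 ⊓ LinearMap.ker d1) ⊔ (g 1 0 ⊓ LinearMap.ker d2)).subtype
      (g 1 0 ⊓ LinearMap.ker d1) with hq0_def
  have hp0q0 : p0 ≤ q0 := Submodule.comap_mono hIP
  have hlcond : Submodule.comap (g 1 0 ⊓ LinearMap.ker d1).subtype (Submodule.map d1 (g 0 0)) ≤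
      LinearMap.ker (p0.mkQ.comp (Submodule.inclusion hPle)) := by
    intro x hx
    rw [LinearMap.mem_ker, LinearMap.comp_apply, Submodule.mkQ_apply,
      Submodule.Quotient.mk_eq_zero]
    exact hx
  set lam := Submodule.liftQ
      (Submodule.comap (g 1 0 ⊓ LinearMap.ker d1).subtype (Submodule.map d1 (g 0 0)))
      (p0.mkQ.comp (Submodule.inclusion hPle)) hlcond with hlam_def
  have hlrange : LinearMap.range lam = Submodule.map p0.mkQ q0 := by
    rw [hlam_def, Submodule.range_liftQ, LinearMap.range_comp, Submodule.range_inclusion,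
      ← hq0_def]
  have hSle2 : Module.finrank ℂ ↥(Submodule.map p0.mkQ q0) ≤ 2 := by
    rw [← hlrange, ← hP2]
    exact LinearMap.finrank_range_le lam
  have htower := Submodule.finrank_quotient_add_finrank (Submodule.map p0.mkQ q0)
  rw [hM3] at htower
  have he3 := (Submodule.quotientQuotientEquivQuotient p0 q0 hp0q0).finrank_eq
  have he2 := (LinearMap.quotientInfEquivSupQuotient (g 1 0 ⊓ LinearMap.ker d2)
      (g 1 0 ⊓ LinearMap.ker d1)).finrank_eq
  rw [sup_comm (g 1 0 ⊓ LinearMap.ker d2) (g 1 0 ⊓ LinearMap.ker d1), ← hq0_def] at he2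
  have hfinal1 : 1 ≤ Module.finrank ℂ (↥(g 1 0 ⊓ LinearMap.ker d2) ⧸
      Submodule.comap (g 1 0 ⊓ LinearMap.ker d2).subtype
        ((g 1 0 ⊓ LinearMap.ker d2) ⊓ (g 1 0 ⊓ LinearMap.ker d1))) := by
    rw [Submodule.comap_inf, he2, ← he3]
    omega
  have htowerQ := Submodule.finrank_quotient_add_finrank
      (Submodule.comap (g 1 0 ⊓ LinearMap.ker d2).subtype
        ((g 1 0 ⊓ LinearMap.ker d2) ⊓ (g 1 0 ⊓ LinearMap.ker d1)))
  rw [hQ2] at htowerQ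
  have hce := (Submodule.comapSubtypeEquivOfLe
      (inf_le_left : (g 1 0 ⊓ LinearMap.ker d2) ⊓ (g 1 0 ⊓ LinearMap.ker d1) ≤
        g 1 0 ⊓ LinearMap.ker d2)).finrank_eq
  have hRle : g 1 0 ⊓ LinearMap.ker d1 ⊓ LinearMap.ker d2 ≤
      (g 1 0 ⊓ LinearMap.ker d2) ⊓ (g 1 0 ⊓ LinearMap.ker d1) := by
    rintro x ⟨⟨h1, h2⟩, h3⟩
    exact ⟨⟨h1, h3⟩, ⟨h1, h2⟩⟩
  haveI : FiniteDimensional ℂ ↥((g 1 0 ⊓ LinearMap.ker d2) ⊓ (g 1 0 ⊓ LinearMap.ker d1)) :=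
    Submodule.finiteDimensional_of_le inf_le_left
  have hfin2 : 2 ≤ Module.finrank ℂ
      ↥((g 1 0 ⊓ LinearMap.ker d2) ⊓ (g 1 0 ⊓ LinearMap.ker d1)) :=
    le_trans hRge2 (Submodule.finrank_mono hRle)
  omega


end Stmt7
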